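/- Let G be a simply connected domain in the complex plane, and let (f_n) be a sequence of functions analytic on G such that the series \sum_{n=1}^{\infty} f_n(s) converges absolutely at almost every point of G (with respect to Lebesgue measure on the plane), and such that the function \Phi(\sigma,t) = \sum_{n=1}^{\infty} |f_n(\sigma+it)| is Lebesgue integrable on G. Then the series \sum_{n=1}^{\infty} f_n(s) converges uniformly on every compact subset of G, and its sum is analytic on G. -/

import Mathlib

set_option autoImplicit false
open MeasureTheory Filter Metric Real Set
open scoped ENNReal NNReal Topology

lemma circle_avg {g : ℂ → ℂ} {z : ℂ} {R : ℝ} (hR : 0 < R)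
    (hc : ContinuousOn g (closedBall z R))
    (hd : ∀ w ∈ ball z R, DifferentiableAt ℂ g w) :
    2 * π * ‖g z‖ ≤ ∫ θ in (0:ℝ)..(2*π), ‖g (circleMap z R θ)‖ := by
  have hcont : Continuous fun θ => g (circleMap z R θ) :=
    hc.comp_continuous (continuous_circleMap z R) fun θ => circleMap_mem_closedBall z hR.le θ
  have hform := Complex.circleIntegral_sub_center_inv_smul_of_differentiable_on_off_countable hR
    Set.countable_empty hc (fun w hw => hd w hw.1)
  have hne : ∀ θ : ℝ, circleMap 0 R θ ≠ 0 := fun θ => circleMap_ne_center hR.ne'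
  have heq : (∮ w in C(z, R), (w - z)⁻¹ • g w)
      = Complex.I * ∫ θ in (0:ℝ)..(2*π), g (circleMap z R θ) := by
    rw [circleIntegral, ← intervalIntegral.integral_const_mul]
    refine intervalIntegral.integral_congr fun θ _ => ?_
    simp only [deriv_circleMap, circleMap_sub_center, smul_eq_mul]
    field_simp [hne θ]
  have hval : (∫ θ in (0:ℝ)..(2*π), g (circleMap z R θ)) = 2 * π * g z := by
    have := hform.symm.trans heq
    have hI : (Complex.I : ℂ) ≠ 0 := Complex.I_ne_zero
    have : Complex.I * (2 * π * g z) = Complex.I * ∫ θ in (0:ℝ)..(2*π), g (circleMap z R θ) := by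
      rw [← this]; push_cast; ring_nf
    exact (mul_left_cancel₀ hI this).symm
  calc 2 * π * ‖g z‖ = ‖∫ θ in (0:ℝ)..(2*π), g (circleMap z R θ)‖ := by
        rw [hval]; simp [norm_mul, abs_of_pos Real.pi_pos, Complex.norm_real]
    _ ≤ ∫ θ in (0:ℝ)..(2*π), ‖g (circleMap z R θ)‖ :=
        intervalIntegral.norm_integral_le_integral_norm (by positivity)

lemma polar_symm (p : ℝ × ℝ) : Complex.polarCoord.symm p = circleMap 0 p.1 p.2 := by
  simp [circleMap, Complex.exp_mul_I]

lemma submean {g : ℂ → ℂ} {z : ℂ} {r : ℝ} (hr : 0 < r)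
    (hc : ContinuousOn g (closedBall z r))
    (hd : ∀ w ∈ ball z r, DifferentiableAt ℂ g w) :
    π * r ^ 2 * ‖g z‖ ≤ ∫ w in ball z r, ‖g w‖ := by
  set S : Set (ℝ × ℝ) := Ioo 0 r ×ˢ Ioo (-π) π with hS
  set h : ℝ × ℝ → ℝ := fun p => p.1 * ‖g (circleMap z p.1 p.2)‖ with hh
  -- continuity of h on the compact rectangle
  have hcm : Continuous fun p : ℝ × ℝ => circleMap z p.1 p.2 := by
    simp only [circleMap]
    fun_prop
  have hmap : MapsTo (fun p : ℝ × ℝ => circleMap z p.1 p.2) (Icc 0 r ×ˢ Icc (-π) π)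
      (closedBall z r) := by
    intro p hp
    simp only [mem_closedBall, circleMap, dist_eq_norm, add_sub_cancel_left]
    rw [norm_mul, Complex.norm_exp_ofReal_mul_I, mul_one, Complex.norm_real,
      Real.norm_eq_abs, abs_of_nonneg hp.1.1]
    exact hp.1.2
  have hhc : ContinuousOn h (Icc 0 r ×ˢ Icc (-π) π) := by
    exact (continuousOn_fst.mul ((hc.comp hcm.continuousOn hmap).norm))
  have hhint : IntegrableOn h S := by
    refine (hhc.integrableOn_compact (isCompact_Icc.prod isCompact_Icc)).mono_set ?_
    exact prod_mono Ioo_subset_Icc_self Ioo_subset_Icc_self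
  -- step 1 : polar change of variables
  have step1 : ∫ w in ball z r, ‖g w‖ = ∫ p in S, h p := by
    set F : ℂ → ℝ := fun w => (ball (0:ℂ) r).indicator (fun w => ‖g (z + w)‖) w with hF
    have hFe : ∀ w : ℂ, F w = (ball z r).indicator (fun w => ‖g w‖) (z + w) := by
      intro w
      by_cases hw : w ∈ ball (0:ℂ) r
      · have hw' : z + w ∈ ball z r := by simpa [mem_ball, dist_eq_norm] using hw
        simp [hF, Set.indicator_apply, hw, hw']
      · have hw' : z + w ∉ ball z r := by simpa [mem_ball, dist_eq_norm] using hw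
        simp [hF, Set.indicator_apply, hw, hw']
    have e1 : ∫ w in ball z r, ‖g w‖ = ∫ w, F w := by
      simp_rw [hFe]
      rw [integral_add_left_eq_self]
      exact (integral_indicator measurableSet_ball).symm
    have e2 : (∫ p in polarCoord.target, p.1 • F (Complex.polarCoord.symm p)) = ∫ w, F w :=
      Complex.integral_comp_polarCoord_symm F
    have e3 : ∀ p ∈ polarCoord.target, p.1 • F (Complex.polarCoord.symm p)
        = S.indicator h p := by
      rintro ⟨ρ, θ⟩ hp
      rw [polarCoord_target] at hp
      have hρ : (0:ℝ) < ρ := hp.1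
      have hmem : Complex.polarCoord.symm (ρ, θ) ∈ ball (0:ℂ) r ↔ ρ < r := by
        rw [polar_symm, mem_ball, Complex.dist_eq, sub_zero, norm_circleMap_zero,
          abs_of_pos hρ]
      by_cases hlt : ρ < r
      · have h1 : Complex.polarCoord.symm (ρ, θ) ∈ ball (0:ℂ) r := hmem.2 hlt
        have h2 : (ρ, θ) ∈ S := ⟨⟨hρ, hlt⟩, hp.2⟩
        simp only [hF]
        rw [Set.indicator_of_mem h1, Set.indicator_of_mem h2]
        simp [hh, polar_symm, circleMap, smul_eq_mul, Complex.exp_mul_I]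
      · have h1 : Complex.polarCoord.symm (ρ, θ) ∉ ball (0:ℂ) r := fun hm => hlt (hmem.1 hm)
        have h2 : (ρ, θ) ∉ S := fun hm => hlt hm.1.2
        simp only [hF]
        rw [Set.indicator_of_notMem h1, Set.indicator_of_notMem h2, smul_zero]
    have e4 : (∫ p in polarCoord.target, p.1 • F (Complex.polarCoord.symm p))
        = ∫ p in S, h p := by
      rw [setIntegral_congr_fun polarCoord.open_target.measurableSet e3,
        setIntegral_indicator (measurableSet_Ioo.prod measurableSet_Ioo),
        inter_eq_self_of_subset_right (by
          rw [polarCoord_target]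
          exact prod_mono Ioo_subset_Ioi_self subset_rfl)]
    rw [e1, ← e2, e4]
  -- step 2 : Fubini
  have step2 : ∫ p in S, h p = ∫ ρ in Ioo (0:ℝ) r, ∫ θ in Ioo (-π) π, h (ρ, θ) := by
    have hvol : (volume : Measure (ℝ × ℝ)) = (volume : Measure ℝ).prod volume :=
      Measure.volume_eq_prod ℝ ℝ
    rw [hS, hvol]
    exact setIntegral_prod h (by rw [← hvol]; exact hhint)
  -- step 3 : inner bound
  have step3 : ∀ ρ ∈ Ioo (0:ℝ) r,
      2 * π * ρ * ‖g z‖ ≤ ∫ θ in Ioo (-π) π, h (ρ, θ) := by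
    intro ρ hρ
    have hcρ : ContinuousOn g (closedBall z ρ) :=
      hc.mono (closedBall_subset_closedBall hρ.2.le)
    have hdρ : ∀ w ∈ ball z ρ, DifferentiableAt ℂ g w :=
      fun w hw => hd w (ball_subset_ball hρ.2.le hw)
    have hcirc := circle_avg hρ.1 hcρ hdρ
    have hper : Function.Periodic (fun θ => ‖g (circleMap z ρ θ)‖) (2 * π) := by
      intro θ
      simp [periodic_circleMap z ρ θ]
    have e5 : ∫ θ in Ioo (-π) π, ‖g (circleMap z ρ θ)‖
        = ∫ θ in (0:ℝ)..(2*π), ‖g (circleMap z ρ θ)‖ := by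
      rw [← integral_Ioc_eq_integral_Ioo, ← intervalIntegral.integral_of_le
        (by linarith [Real.pi_pos])]
      have := hper.intervalIntegral_add_eq (-π) 0
      rw [show -π + 2*π = π by ring, show (0:ℝ) + 2*π = 2*π by ring] at this
      exact this
    have e6 : ∫ θ in Ioo (-π) π, h (ρ, θ) = ρ * ∫ θ in Ioo (-π) π, ‖g (circleMap z ρ θ)‖ := by
      simp_rw [hh]
      rw [integral_const_mul]
    rw [e6, e5]
    calc 2 * π * ρ * ‖g z‖ = ρ * (2 * π * ‖g z‖) := by ring
      _ ≤ ρ * ∫ θ in (0:ℝ)..(2*π), ‖g (circleMap z ρ θ)‖ :=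
          mul_le_mul_of_nonneg_left hcirc hρ.1.le
  -- step 4 : outer integration
  have houter : IntegrableOn (fun ρ => ∫ θ in Ioo (-π) π, h (ρ, θ)) (Ioo (0:ℝ) r) := by
    have := hhint
    rw [hS, IntegrableOn, Measure.volume_eq_prod, ← Measure.prod_restrict] at this
    exact this.integral_prod_left
  have hlow : IntegrableOn (fun ρ : ℝ => 2 * π * ρ * ‖g z‖) (Ioo (0:ℝ) r) := by
    have hco : Continuous fun ρ : ℝ => 2 * π * ρ * ‖g z‖ := by fun_prop
    exact (hco.integrableOn_Icc (a := 0) (b := r)).mono_set Ioo_subset_Icc_self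
  have step4 : ∫ ρ in Ioo (0:ℝ) r, 2 * π * ρ * ‖g z‖
      ≤ ∫ ρ in Ioo (0:ℝ) r, ∫ θ in Ioo (-π) π, h (ρ, θ) :=
    setIntegral_mono_on hlow houter measurableSet_Ioo step3
  have step5 : ∫ ρ in Ioo (0:ℝ) r, 2 * π * ρ * ‖g z‖ = π * r ^ 2 * ‖g z‖ := by
    rw [show (fun ρ : ℝ => 2 * π * ρ * ‖g z‖) = fun ρ : ℝ => (2 * π * ‖g z‖) * ρ by
      funext ρ; ring]
    rw [integral_const_mul, ← integral_Ioc_eq_integral_Ioo,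
      ← intervalIntegral.integral_of_le hr.le, integral_id]
    ring
  rw [step1, step2, ← step5]
  exact step4

set_option maxHeartbeats 1000000 in
/-- Lemma 1: a series of analytic functions on a simply connected domain `G`,
converging absolutely almost everywhere, whose sum of absolute values is integrable,
converges uniformly on compact subsets and has an analytic sum. -/
theorem stmt_0 (G : Set ℂ) (hG : IsOpen G) (hGconn : SimplyConnectedSpace G)
    (f : ℕ → ℂ → ℂ) (hf : ∀ n, DifferentiableOn ℂ (f n) G)
    (hae : ∀ᵐ s ∂(volume.restrict G), Summable fun n => ‖f n s‖)
    (hint : IntegrableOn (fun s => ∑' n, ‖f n s‖) G volume) :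
    (∀ K ⊆ G, IsCompact K →
      TendstoUniformlyOn (fun N s => ∑ n ∈ Finset.range N, f n s)
        (fun s => ∑' n, f n s) atTop K) ∧
    DifferentiableOn ℂ (fun s => ∑' n, f n s) G := by
  classical
  have hGm : MeasurableSet G := hG.measurableSet
  have hmeas : ∀ n : ℕ, AEMeasurable (fun z => (‖f n z‖₊ : ℝ≥0∞)) (volume.restrict G) :=
    fun n => ((hf n).continuousOn.aestronglyMeasurable hGm).enorm
  set Ψ : ℕ → ℂ → ℝ≥0∞ := fun N z => ∑' n, (‖f (n + N) z‖₊ : ℝ≥0∞) with hΨdef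
  have hΨmeas : ∀ N, AEMeasurable (Ψ N) (volume.restrict G) :=
    fun N => AEMeasurable.ennreal_tsum fun n => hmeas (n + N)
  have hΨmono : ∀ N z, Ψ N z ≤ Ψ 0 z := by
    intro N z
    simpa [hΨdef] using ENNReal.tsum_comp_le_tsum_of_injective (add_left_injective N)
      fun n => (‖f n z‖₊ : ℝ≥0∞)
  have hcoe : ∀ z : ℂ, (Summable fun n => ‖f n z‖) →
      Ψ 0 z = ENNReal.ofReal (∑' n, ‖f n z‖) := by
    intro z hz
    simp only [hΨdef, Nat.add_zero]
    rw [ENNReal.ofReal_tsum_of_nonneg (fun n => norm_nonneg _) hz]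
    simp [← enorm_eq_nnnorm, ofReal_norm]
  have htop : ∀ z : ℂ, (Summable fun n => ‖f n z‖) → Ψ 0 z ≠ ∞ := by
    intro z hz
    rw [hcoe z hz]
    exact ENNReal.ofReal_ne_top
  have hC : (∫⁻ z in G, Ψ 0 z) < ∞ := by
    have heq : ∀ᵐ z ∂(volume.restrict G), Ψ 0 z = (‖∑' n, ‖f n z‖‖₊ : ℝ≥0∞) := by
      filter_upwards [hae] with z hz
      rw [hcoe z hz, ← Real.enorm_eq_ofReal (tsum_nonneg fun n => norm_nonneg _)]
      rfl
    rw [lintegral_congr_ae heq]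
    exact hint.2
  have hΨ0 : ∀ᵐ z ∂(volume.restrict G), Tendsto (fun N => Ψ N z) atTop (𝓝 0) := by
    filter_upwards [hae] with z hz
    exact ENNReal.tendsto_sum_nat_add _ (htop z hz)
  have htend : Tendsto (fun N => ∫⁻ z in G, Ψ N z) atTop (𝓝 0) := by
    have := tendsto_lintegral_of_dominated_convergence' (μ := volume.restrict G)
      (F := Ψ) (f := fun _ => 0) (Ψ 0) hΨmeas
      (fun N => Filter.Eventually.of_forall fun z => hΨmono N z) hC.ne hΨ0
    simpa using this
  -- pointwise estimate from the sub-mean value property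
  have hE1 : ∀ (n : ℕ) (z : ℂ) (r : ℝ), 0 < r → Metric.closedBall z r ⊆ G →
      ENNReal.ofReal (π * r ^ 2 * ‖f n z‖) ≤ ∫⁻ w in Metric.ball z r, (‖f n w‖₊ : ℝ≥0∞) := by
    intro n z r hr hball
    have hc : ContinuousOn (f n) (Metric.closedBall z r) := (hf n).continuousOn.mono hball
    have hd : ∀ w ∈ Metric.ball z r, DifferentiableAt ℂ (f n) w := fun w hw =>
      (hf n).differentiableAt (hG.mem_nhds (hball (ball_subset_closedBall hw)))
    have h1 := submean hr hc hd
    have hInt : IntegrableOn (fun w => ‖f n w‖) (Metric.ball z r) :=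
      (hc.norm.integrableOn_compact (isCompact_closedBall z r)).mono_set ball_subset_closedBall
    calc ENNReal.ofReal (π * r ^ 2 * ‖f n z‖)
        ≤ ENNReal.ofReal (∫ w in Metric.ball z r, ‖f n w‖) := ENNReal.ofReal_le_ofReal h1
      _ = ∫⁻ w in Metric.ball z r, ENNReal.ofReal ‖f n w‖ :=
          ofReal_integral_eq_lintegral_ofReal hInt (Filter.Eventually.of_forall fun w =>
            norm_nonneg _)
      _ = ∫⁻ w in Metric.ball z r, (‖f n w‖₊ : ℝ≥0∞) := by
          simp [← enorm_eq_nnnorm, ofReal_norm]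
  have hmeasball : ∀ (n : ℕ) (z : ℂ) (r : ℝ), Metric.closedBall z r ⊆ G →
      AEMeasurable (fun w => (‖f n w‖₊ : ℝ≥0∞)) (volume.restrict (Metric.ball z r)) := by
    intro n z r hball
    exact (((hf n).continuousOn.mono ((ball_subset_closedBall).trans
      hball)).aestronglyMeasurable measurableSet_ball).enorm
  have hsumlint : ∀ (N : ℕ) (z : ℂ) (r : ℝ), Metric.closedBall z r ⊆ G →
      (∑' n, ∫⁻ w in Metric.ball z r, (‖f (n + N) w‖₊ : ℝ≥0∞)) ≤ ∫⁻ w in G, Ψ N w := by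
    intro N z r hball
    rw [← lintegral_tsum fun n => hmeasball (n + N) z r hball]
    exact lintegral_mono_set ((ball_subset_closedBall).trans hball)
  have hsummable : ∀ (z : ℂ) (r : ℝ), 0 < r → Metric.closedBall z r ⊆ G →
      Summable fun n => ‖f n z‖ := by
    intro z r hr hball
    have hpos : (0:ℝ) < π * r ^ 2 := by positivity
    refine summable_of_sum_range_le (c := (π * r ^ 2)⁻¹ * (∫⁻ z in G, Ψ 0 z).toReal)
      (fun n => norm_nonneg _) fun N => ?_
    have h2 : ENNReal.ofReal (∑ n ∈ Finset.range N, π * r ^ 2 * ‖f n z‖)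
        ≤ ∫⁻ z in G, Ψ 0 z := by
      rw [ENNReal.ofReal_sum_of_nonneg fun i _ => by positivity]
      calc ∑ n ∈ Finset.range N, ENNReal.ofReal (π * r ^ 2 * ‖f n z‖)
          ≤ ∑ n ∈ Finset.range N, ∫⁻ w in Metric.ball z r, (‖f n w‖₊ : ℝ≥0∞) :=
            Finset.sum_le_sum fun n _ => hE1 n z r hr hball
        _ ≤ ∑' n, ∫⁻ w in Metric.ball z r, (‖f (n + 0) w‖₊ : ℝ≥0∞) := by
            simpa using ENNReal.sum_le_tsum (f := fun n =>
              ∫⁻ w in Metric.ball z r, (‖f n w‖₊ : ℝ≥0∞)) (Finset.range N)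
        _ ≤ ∫⁻ w in G, Ψ 0 w := hsumlint 0 z r hball
    have h3 : ∑ n ∈ Finset.range N, π * r ^ 2 * ‖f n z‖
        ≤ (∫⁻ z in G, Ψ 0 z).toReal :=
      (ENNReal.ofReal_le_iff_le_toReal hC.ne).1 h2
    rw [← Finset.mul_sum] at h3
    rw [inv_mul_eq_div, le_div_iff₀ hpos]
    linarith
  have htail : ∀ (z : ℂ) (r : ℝ), 0 < r → Metric.closedBall z r ⊆ G → ∀ N : ℕ,
      ENNReal.ofReal (π * r ^ 2 * ∑' n, ‖f (n + N) z‖) ≤ ∫⁻ w in G, Ψ N w := by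
    intro z r hr hball N
    have hsum := hsummable z r hr hball
    have hsumtail : Summable fun n => ‖f (n + N) z‖ := (_root_.summable_nat_add_iff (f := fun n => ‖f n z‖) N).2 hsum
    calc ENNReal.ofReal (π * r ^ 2 * ∑' n, ‖f (n + N) z‖)
        = ENNReal.ofReal (∑' n, π * r ^ 2 * ‖f (n + N) z‖) := by
          rw [tsum_mul_left]
      _ = ∑' n, ENNReal.ofReal (π * r ^ 2 * ‖f (n + N) z‖) :=
          ENNReal.ofReal_tsum_of_nonneg (fun n => by positivity) (hsumtail.mul_left _)
      _ ≤ ∑' n, ∫⁻ w in Metric.ball z r, (‖f (n + N) w‖₊ : ℝ≥0∞) :=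
          ENNReal.tsum_le_tsum fun n => hE1 (n + N) z r hr hball
      _ ≤ ∫⁻ w in G, Ψ N w := hsumlint N z r hball
  -- uniform convergence on compacts
  have part1 : ∀ K ⊆ G, IsCompact K →
      TendstoUniformlyOn (fun N s => ∑ n ∈ Finset.range N, f n s)
        (fun s => ∑' n, f n s) atTop K := by
    intro K hKG hK
    obtain ⟨δ, hδ0, hδ⟩ := hK.exists_cthickening_subset_open hG hKG
    have hrK : ∀ z ∈ K, Metric.closedBall z δ ⊆ G := fun z hz =>
      (closedBall_subset_cthickening hz δ).trans hδ
    have hpos : (0:ℝ) < π * δ ^ 2 := by positivity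
    rw [Metric.tendstoUniformlyOn_iff]
    intro ε hε
    have hb : Tendsto (fun N => (π * δ ^ 2)⁻¹ * (∫⁻ z in G, Ψ N z).toReal) atTop (𝓝 0) := by
      have h1 : Tendsto (fun N => (∫⁻ z in G, Ψ N z).toReal) atTop (𝓝 0) := by
        have := (ENNReal.tendsto_toReal (a := 0) (by simp)).comp htend
        simpa [Function.comp_def] using this
      have := h1.const_mul ((π * δ ^ 2)⁻¹)
      simpa using this
    filter_upwards [hb.eventually_lt_const hε] with N hN z hz
    have hsum := hsummable z δ hδ0 (hrK z hz)
    have hsumC : Summable fun n => f n z := Summable.of_norm hsum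
    have hsumtail : Summable fun n => ‖f (n + N) z‖ := (_root_.summable_nat_add_iff (f := fun n => ‖f n z‖) N).2 hsum
    rw [dist_eq_norm]
    have heq2 : (∑' n, f n z) - ∑ n ∈ Finset.range N, f n z = ∑' n, f (n + N) z := by
      rw [← Summable.sum_add_tsum_nat_add (f := fun n => f n z) N hsumC]
      ring
    have hfin : (∫⁻ z in G, Ψ N z) ≠ ∞ :=
      ((lintegral_mono fun z => hΨmono N z).trans_lt hC).ne
    have h6 : π * δ ^ 2 * ∑' n, ‖f (n + N) z‖ ≤ (∫⁻ z in G, Ψ N z).toReal :=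
      (ENNReal.ofReal_le_iff_le_toReal hfin).1 (htail z δ hδ0 (hrK z hz) N)
    calc ‖(∑' n, f n z) - ∑ n ∈ Finset.range N, f n z‖
        = ‖∑' n, f (n + N) z‖ := by rw [heq2]
      _ ≤ ∑' n, ‖f (n + N) z‖ := norm_tsum_le_tsum_norm hsumtail
      _ ≤ (π * δ ^ 2)⁻¹ * (∫⁻ z in G, Ψ N z).toReal := by
          rw [inv_mul_eq_div, le_div_iff₀ hpos]
          linarith
      _ < ε := hN
  refine ⟨part1, ?_⟩
  have hloc : TendstoLocallyUniformlyOn (fun N s => ∑ n ∈ Finset.range N, f n s)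
      (fun s => ∑' n, f n s) atTop G :=
    (tendstoLocallyUniformlyOn_iff_forall_isCompact hG).2 fun K hKG hK => part1 K hKG hK
  exact hloc.differentiableOn (Filter.Eventually.of_forall fun N =>
    DifferentiableOn.fun_sum fun n _ => hf n) hG
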